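/- Let θ ≥ (8+2ε)·n·(ℓ log n + log C(n,k) + log 2)/(OPT·ε²), where OPT is the maximum of E[I(S)] over all size-k node sets S. Let R₁,…,R_θ be i.i.d. random RR sets and, for a node set S with |S| ≤ k, let F_R(S) be the fraction of the θ RR sets intersecting S. Then Pr[|n·F_R(S) − E[I(S)]| ≥ (ε/2)·OPT] ≤ n^{−ℓ}/C(n,k). -/

import Mathlib

open MeasureTheory ProbabilityTheory

lemma aux_exp_neg {t : ℝ} (ht : t ≤ 0) : Real.exp t ≤ 1 + t + t^2/2 := by
  have hd : ∀ x : ℝ, HasDerivAt (fun x => 1 + x + x^2/2 - Real.exp x)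
      (1 + x - Real.exp x) x := by
    intro x
    have h1 : HasDerivAt (fun x : ℝ => 1 + x + x^2/2) (1 + x) x := by
      have := ((hasDerivAt_id x).const_add 1).add ((hasDerivAt_pow 2 x).div_const 2)
      exact this.congr_deriv (by simp)
    exact h1.sub (Real.hasDerivAt_exp x)
  have hanti : Antitone (fun x : ℝ => 1 + x + x^2/2 - Real.exp x) := by
    apply antitone_of_deriv_nonpos
    · exact fun x => (hd x).differentiableAt
    · intro x
      rw [(hd x).deriv]
      have := Real.add_one_le_exp x
      linarith
  have := hanti ht
  simp only [Real.exp_zero] at this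
  nlinarith [this]

lemma aux_log {x : ℝ} (hx : 0 ≤ x) : 2*x/(2+x) ≤ Real.log (1+x) := by
  set f : ℝ → ℝ := fun x => Real.log (1+x) - 2*x/(2+x) with hf
  have hd : ∀ y : ℝ, 0 ≤ y → HasDerivAt f ((1+y)⁻¹ - 4/(2+y)^2) y := by
    intro y hy
    have h1 : HasDerivAt (fun y : ℝ => Real.log (1+y)) ((1+y)⁻¹) y := by
      have := (Real.hasDerivAt_log (by linarith : (1:ℝ)+y ≠ 0)).comp y
        ((hasDerivAt_id y).const_add 1)
      exact this.congr_deriv (by simp)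
    have h2 : HasDerivAt (fun y : ℝ => 2*y/(2+y)) (4/(2+y)^2) y := by
      have := ((hasDerivAt_id y).const_mul 2).div ((hasDerivAt_id y).const_add 2)
        (by linarith : (2:ℝ)+y ≠ 0)
      exact this.congr_deriv (by simp only [id]; ring)
    exact h1.sub h2
  have hmono : MonotoneOn f (Set.Ici 0) := by
    apply monotoneOn_of_deriv_nonneg (convex_Ici 0)
    · exact fun y hy => ((hd y hy).differentiableAt).continuousAt.continuousWithinAt
    · intro y hy
      rw [interior_Ici] at hy
      exact ((hd y (le_of_lt hy)).differentiableAt).differentiableWithinAt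
    · intro y hy
      rw [interior_Ici] at hy
      have hy0 : 0 < y := Set.mem_Ioi.mp hy
      rw [(hd y hy0.le).deriv]
      have h1 : (0:ℝ) < 1+y := by linarith
      have h2 : (0:ℝ) < (2+y)^2 := by positivity
      rw [sub_nonneg, div_le_iff₀ h2, inv_mul_eq_div, le_div_iff₀ h1]
      nlinarith
  have h0 : f 0 = 0 := by simp [hf]
  have := hmono (Set.self_mem_Ici) (Set.mem_Ici.mpr hx) hx
  rw [h0] at this
  simp only [hf] at this
  linarith


set_option maxHeartbeats 1000000 in
theorem rr_fraction_concentration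
    {Ω : Type*} [MeasureSpace Ω] [IsProbabilityMeasure (ℙ : Measure Ω)]
    (n k : ℕ) (hn : 1 ≤ n) (hk : 1 ≤ k) (hkn : k ≤ n)
    (ℓ ε OPT EIS : ℝ)
    (hε : 0 < ε) (hℓ : 0 < ℓ) (hOPT : 0 < OPT)
    (hEIS0 : 0 ≤ EIS) (hEISle : EIS ≤ OPT)
    (θ : ℕ)
    (hθ : ((8:ℝ) + 2*ε) * n * (ℓ * Real.log n + Real.log (Nat.choose n k) + Real.log 2)
            / (OPT * ε^2) ≤ θ)
    (Y : Fin θ → Ω → ℝ)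
    (hmeas : ∀ i, Measurable (Y i))
    (hindep : iIndepFun Y ℙ)
    (hBern : ∀ i ω, Y i ω = 0 ∨ Y i ω = 1)
    (hmean : ∀ i, ∫ ω, Y i ω ∂ℙ = EIS / n) :
    (ℙ {ω | ε/2 * OPT ≤ |(n : ℝ) * ((∑ i, Y i ω) / θ) - EIS|}).toReal
      ≤ (n : ℝ) ^ (-ℓ) / (Nat.choose n k) := by
  have hn0 : (0:ℝ) < n := by exact_mod_cast hn
  have hC1 : (1:ℝ) ≤ (Nat.choose n k : ℝ) := by
    exact_mod_cast Nat.succ_le_of_lt (Nat.choose_pos hkn)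
  have hC0 : (0:ℝ) < (Nat.choose n k : ℝ) := by linarith
  set C : ℝ := (Nat.choose n k : ℝ) with hCdef
  set L : ℝ := ℓ * Real.log n + Real.log C + Real.log 2 with hLdef
  have hL0 : 0 < L := by
    have h1 : 0 ≤ Real.log n := Real.log_nonneg (by exact_mod_cast hn)
    have h2 : 0 ≤ Real.log C := Real.log_nonneg hC1
    have h3 : 0 < Real.log 2 := Real.log_pos (by norm_num)
    have := mul_nonneg hℓ.le h1
    simp only [hLdef]; linarith
  have hθpos : 0 < (θ:ℝ) := by
    refine lt_of_lt_of_le ?_ hθ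
    positivity
  set p : ℝ := EIS / n with hpdef
  set δ : ℝ := ε * OPT / (2 * n) with hδdef
  have hδ0 : 0 < δ := by positivity
  have hp0 : 0 ≤ p := by positivity
  have hθn : 0 < θ := by exact_mod_cast hθpos
  have i0 : Fin θ := ⟨0, hθn⟩
  have hpP : p ≤ OPT / n := by
    rw [hpdef]; gcongr
  -- integrability of the Y i
  have hYint : ∀ i, Integrable (Y i) ℙ := by
    intro i
    refine (integrable_const (1:ℝ)).mono' (hmeas i).aestronglyMeasurable ?_
    filter_upwards with ω
    rcases hBern i ω with h | h <;> simp [h]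
  have hp1 : p ≤ 1 := by
    rw [← hmean i0]
    calc ∫ ω, Y i0 ω ∂ℙ ≤ ∫ _, (1:ℝ) ∂ℙ := by
          refine integral_mono (hYint i0) (integrable_const 1) (fun ω => ?_)
          rcases hBern i0 ω with h | h <;> simp [h]
      _ = 1 := by simp
  -- case EIS = 0
  rcases eq_or_lt_of_le hEIS0 with hEISz | hEISpos
  · have hae : ∀ i : Fin θ, ∀ᵐ ω ∂ℙ, Y i ω = 0 := by
      intro i
      have hnn : 0 ≤ᵐ[ℙ] Y i := by
        filter_upwards with ω; rcases hBern i ω with h | h <;> simp [h]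
      have hz : ∫ ω, Y i ω ∂ℙ = 0 := by rw [hmean i, hpdef, ← hEISz, zero_div]
      have := (integral_eq_zero_iff_of_nonneg_ae hnn (hYint i)).mp hz
      filter_upwards [this] with ω h using h
    have hall : ∀ᵐ ω ∂ℙ, ∀ i, Y i ω = 0 := ae_all_iff.mpr hae
    have hnull : ℙ {ω | ε/2 * OPT ≤ |(n : ℝ) * ((∑ i, Y i ω) / θ) - EIS|} = 0 := by
      refine measure_mono_null ?_ (ae_iff.mp hall)
      intro ω hω hforall
      simp only [Set.mem_setOf_eq] at hω
      rw [Finset.sum_eq_zero (fun i _ => hforall i), ← hEISz] at hω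
      simp at hω
      nlinarith
    rw [hnull]
    simp only [ENNReal.toReal_zero]
    positivity
  have hpp : 0 < p := by positivity
  -- exp integrability
  have hYexp : ∀ (t : ℝ) (i : Fin θ), Integrable (fun ω => Real.exp (t * Y i ω)) ℙ := by
    intro t i
    refine (integrable_const (max 1 (Real.exp t))).mono'
      (((hmeas i).const_mul t).exp).aestronglyMeasurable ?_
    filter_upwards with ω
    rcases hBern i ω with h | h
    · simp [h, Real.abs_exp, le_max_left]
    · simp [h, Real.abs_exp, le_max_right]
  have hSexp : ∀ t : ℝ, Integrable (fun ω => Real.exp (t * (∑ i, Y i) ω)) ℙ := by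
    intro t
    exact hindep.integrable_exp_mul_sum hmeas (fun i _ => hYexp t i)
  -- mgf computations
  have hmgfY : ∀ (t : ℝ) (i : Fin θ), mgf (Y i) ℙ t = 1 + p * (Real.exp t - 1) := by
    intro t i
    have hptw : (fun ω => Real.exp (t * Y i ω)) =
        fun ω => 1 + (Real.exp t - 1) * Y i ω := by
      funext ω
      rcases hBern i ω with h | h <;> simp [h]
    rw [mgf, hptw]
    rw [integral_add (integrable_const 1) ((hYint i).const_mul _)]
    rw [integral_const_mul, hmean i]
    simp only [integral_const, smul_eq_mul, measure_univ, probReal_univ, ENNReal.toReal_one, one_mul]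
    ring
  have hmgfS : ∀ t : ℝ, mgf (∑ i, Y i) ℙ t = (1 + p * (Real.exp t - 1))^θ := by
    intro t
    rw [hindep.mgf_sum hmeas Finset.univ]
    simp [hmgfY t]
  have hmgfS_le : ∀ t : ℝ, mgf (∑ i, Y i) ℙ t ≤ Real.exp ((θ:ℝ) * (p * (Real.exp t - 1))) := by
    intro t
    rw [hmgfS t]
    have h0 : 0 ≤ 1 + p * (Real.exp t - 1) := by
      have h1 : -1 ≤ Real.exp t - 1 := by
        have := Real.exp_pos t; linarith
      nlinarith
    calc (1 + p * (Real.exp t - 1))^θ ≤ (Real.exp (p * (Real.exp t - 1)))^θ := by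
          apply pow_le_pow_left₀ h0
          linarith [Real.add_one_le_exp (p * (Real.exp t - 1))]
      _ = Real.exp ((θ:ℝ) * (p * (Real.exp t - 1))) := by
          rw [← Real.exp_nat_mul]
  -- the key exponent
  set E : ℝ := δ^2 / (2*p + δ) with hEdef
  have hE0 : 0 < E := by positivity
  -- L ≤ θ * E
  have hLE : L ≤ (θ:ℝ) * E := by
    have hcE : ε^2 * OPT / ((8 + 2*ε) * n) ≤ E := by
      have h1 : δ^2 / (2*(OPT/n) + δ) ≤ E := by
        apply div_le_div_of_nonneg_left (by positivity) (by positivity)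
        linarith
      have h2 : δ^2 / (2*(OPT/n) + δ) = ε^2 * OPT / ((8 + 2*ε) * n) := by
        rw [hδdef]
        field_simp
        ring
      linarith
    have hc0 : 0 < ε^2 * OPT / ((8 + 2*ε) * n) := by positivity
    have := mul_le_mul_of_nonneg_right hθ hc0.le
    have heq : ((8:ℝ) + 2*ε) * n * L / (OPT * ε^2) * (ε^2 * OPT / ((8 + 2*ε) * n)) = L := by
      field_simp
    rw [heq] at this
    calc L ≤ (θ:ℝ) * (ε^2 * OPT / ((8 + 2*ε) * n)) := this
      _ ≤ (θ:ℝ) * E := by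
          apply mul_le_mul_of_nonneg_left hcE hθpos.le
  -- split the event
  have hsplit : {ω | ε/2 * OPT ≤ |(n : ℝ) * ((∑ i, Y i ω) / θ) - EIS|} ⊆
      {ω | (θ:ℝ)*(p+δ) ≤ (∑ i, Y i) ω} ∪ {ω | (∑ i, Y i) ω ≤ (θ:ℝ)*(p-δ)} := by
    intro ω hω
    simp only [Set.mem_setOf_eq, Set.mem_union, Finset.sum_apply]
    simp only [Set.mem_setOf_eq] at hω
    set A : ℝ := (∑ i, Y i ω) - θ * p with hAdef
    have hId : (n:ℝ) * ((∑ i, Y i ω) / θ) - EIS = (n/θ) * A := by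
      have : EIS = n * p := by rw [hpdef]; field_simp
      rw [this, hAdef]
      field_simp
    rw [hId, abs_mul, abs_of_pos (by positivity : (0:ℝ) < (n:ℝ)/θ)] at hω
    have h2 : (θ:ℝ) * δ ≤ |A| := by
      have hc : (0:ℝ) < (θ:ℝ)/n := by positivity
      calc (θ:ℝ) * δ = ((θ:ℝ)/n) * (ε/2 * OPT) := by rw [hδdef]; field_simp
        _ ≤ ((θ:ℝ)/n) * ((n/θ) * |A|) := mul_le_mul_of_nonneg_left hω hc.le
        _ = |A| := by field_simp
    have hexp1 : (θ:ℝ)*(p+δ) = (θ:ℝ)*p + (θ:ℝ)*δ := by ring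
    have hexp2 : (θ:ℝ)*(p-δ) = (θ:ℝ)*p - (θ:ℝ)*δ := by ring
    rcases le_abs.mp h2 with h | h
    · left; rw [hAdef] at h; rw [hexp1]; linarith
    · right; rw [hAdef] at h; rw [hexp2]; linarith
  -- upper tail
  set t1 : ℝ := Real.log (1 + δ/p) with ht1def
  have ht1 : 0 ≤ t1 := Real.log_nonneg (by linarith [div_pos hδ0 hpp])
  have he1 : Real.exp t1 = 1 + δ/p := Real.exp_log (by linarith [div_pos hδ0 hpp])
  have hkey1 : p * (Real.exp t1 - 1) - t1 * (p + δ) ≤ -E := by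
    have hlog : 2*δ/(2*p+δ) ≤ t1 := by
      have h := aux_log (le_of_lt (div_pos hδ0 hpp))
      have heq : 2*(δ/p)/(2+δ/p) = 2*δ/(2*p+δ) := by
        rw [div_eq_div_iff (by positivity) (by positivity)]
        field_simp
      rw [heq] at h
      exact h
    have h1 : p * (Real.exp t1 - 1) = δ := by
      rw [he1]; field_simp; ring
    have h2 : (p + δ) * (2*δ/(2*p+δ)) ≤ (p + δ) * t1 :=
      mul_le_mul_of_nonneg_left hlog (by linarith)
    have h3 : δ - (p + δ) * (2*δ/(2*p+δ)) = -E := by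
      rw [hEdef]; field_simp; ring
    have h4 : t1 * (p + δ) = (p + δ) * t1 := by ring
    rw [h1, h4]
    linarith
  have htail1 : (ℙ {ω | (θ:ℝ)*(p+δ) ≤ (∑ i, Y i) ω}).toReal ≤ Real.exp (-L) := by
    calc (ℙ {ω | (θ:ℝ)*(p+δ) ≤ (∑ i, Y i) ω}).toReal
        ≤ Real.exp (-t1 * ((θ:ℝ)*(p+δ))) * mgf (∑ i, Y i) ℙ t1 :=
          measure_ge_le_exp_mul_mgf _ ht1 (hSexp t1)
      _ ≤ Real.exp (-t1 * ((θ:ℝ)*(p+δ))) * Real.exp ((θ:ℝ) * (p * (Real.exp t1 - 1))) :=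
          mul_le_mul_of_nonneg_left (hmgfS_le t1) (Real.exp_pos _).le
      _ = Real.exp ((θ:ℝ) * (p * (Real.exp t1 - 1) - t1 * (p + δ))) := by
          rw [← Real.exp_add]; congr 1; ring
      _ ≤ Real.exp ((θ:ℝ) * (-E)) := by
          apply Real.exp_le_exp.mpr
          exact mul_le_mul_of_nonneg_left hkey1 hθpos.le
      _ ≤ Real.exp (-L) := by
          apply Real.exp_le_exp.mpr
          have : (θ:ℝ) * (-E) = -((θ:ℝ) * E) := by ring
          rw [this]
          linarith
  -- lower tail
  set t2 : ℝ := -(δ/p) with ht2def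
  have ht2 : t2 ≤ 0 := by
    rw [ht2def]
    simp only [neg_nonpos]
    positivity
  have hkey2 : p * (Real.exp t2 - 1) - t2 * (p - δ) ≤ -E := by
    have hexp := aux_exp_neg ht2
    have h1 : p * (Real.exp t2 - 1) ≤ p * (t2 + t2^2/2) :=
      mul_le_mul_of_nonneg_left (by linarith) hp0
    have h2 : p * (t2 + t2^2/2) - t2 * (p - δ) = -(δ^2/(2*p)) := by
      rw [ht2def]; field_simp; ring
    have h3 : E ≤ δ^2/(2*p) := by
      rw [hEdef]
      apply div_le_div_of_nonneg_left (by positivity) (by positivity)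
      linarith
    have h4 := sub_le_sub_right h1 (t2 * (p - δ))
    rw [h2] at h4
    exact h4.trans (neg_le_neg h3)
  have htail2 : (ℙ {ω | (∑ i, Y i) ω ≤ (θ:ℝ)*(p-δ)}).toReal ≤ Real.exp (-L) := by
    calc (ℙ {ω | (∑ i, Y i) ω ≤ (θ:ℝ)*(p-δ)}).toReal
        ≤ Real.exp (-t2 * ((θ:ℝ)*(p-δ))) * mgf (∑ i, Y i) ℙ t2 :=
          measure_le_le_exp_mul_mgf _ ht2 (hSexp t2)
      _ ≤ Real.exp (-t2 * ((θ:ℝ)*(p-δ))) * Real.exp ((θ:ℝ) * (p * (Real.exp t2 - 1))) :=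
          mul_le_mul_of_nonneg_left (hmgfS_le t2) (Real.exp_pos _).le
      _ = Real.exp ((θ:ℝ) * (p * (Real.exp t2 - 1) - t2 * (p - δ))) := by
          rw [← Real.exp_add]; congr 1; ring
      _ ≤ Real.exp ((θ:ℝ) * (-E)) := by
          apply Real.exp_le_exp.mpr
          exact mul_le_mul_of_nonneg_left hkey2 hθpos.le
      _ ≤ Real.exp (-L) := by
          apply Real.exp_le_exp.mpr
          have : (θ:ℝ) * (-E) = -((θ:ℝ) * E) := by ring
          rw [this]
          linarith
  -- combine
  have hcomb : (ℙ {ω | ε/2 * OPT ≤ |(n : ℝ) * ((∑ i, Y i ω) / θ) - EIS|}).toReal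
      ≤ 2 * Real.exp (-L) := by
    calc (ℙ {ω | ε/2 * OPT ≤ |(n : ℝ) * ((∑ i, Y i ω) / θ) - EIS|}).toReal
        ≤ (ℙ ({ω | (θ:ℝ)*(p+δ) ≤ (∑ i, Y i) ω} ∪ {ω | (∑ i, Y i) ω ≤ (θ:ℝ)*(p-δ)})).toReal := by
          apply ENNReal.toReal_mono (measure_ne_top _ _)
          exact measure_mono hsplit
      _ ≤ (ℙ {ω | (θ:ℝ)*(p+δ) ≤ (∑ i, Y i) ω}).toReal
            + (ℙ {ω | (∑ i, Y i) ω ≤ (θ:ℝ)*(p-δ)}).toReal := by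
          rw [← ENNReal.toReal_add (measure_ne_top _ _) (measure_ne_top _ _)]
          exact ENNReal.toReal_mono
            (by exact ENNReal.add_ne_top.mpr ⟨measure_ne_top _ _, measure_ne_top _ _⟩)
            (measure_union_le _ _)
      _ ≤ Real.exp (-L) + Real.exp (-L) := add_le_add htail1 htail2
      _ = 2 * Real.exp (-L) := by ring
  have hfinal : 2 * Real.exp (-L) = (n : ℝ) ^ (-ℓ) / C := by
    have h1 : Real.exp (-(ℓ * Real.log n)) = (n:ℝ) ^ (-ℓ) := by
      rw [Real.rpow_def_of_pos hn0]
      ring_nf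
    have h2 : Real.exp (-Real.log C) = C⁻¹ := by
      rw [Real.exp_neg, Real.exp_log hC0]
    have h3 : Real.exp (-Real.log 2) = 2⁻¹ := by
      rw [Real.exp_neg, Real.exp_log (by norm_num : (0:ℝ) < 2)]
    have : Real.exp (-L) = (n:ℝ) ^ (-ℓ) * C⁻¹ * 2⁻¹ := by
      rw [hLdef]
      rw [show -(ℓ * Real.log n + Real.log C + Real.log 2)
          = -(ℓ * Real.log n) + -Real.log C + -Real.log 2 by ring]
      rw [Real.exp_add, Real.exp_add, h1, h2, h3]
    rw [this]
    have hrp : 0 < (n:ℝ) ^ (-ℓ) := Real.rpow_pos_of_pos hn0 _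
    field_simp
  linarith [hcomb, hfinal.le, hfinal.ge]
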